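/- For a risk parameter θ, the equilibrium non-participation probability p(θ) = (1 − e^{θ})/(1 − e^{vθ}) (with p(0) := 1/v by continuity) is monotone decreasing in θ: a risk-seeking bidder (θ > 0) participates with higher probability than a risk-neutral one (θ = 0), who in turn participates with higher probability than a risk-averse one (θ < 0). Equivalently, p(θ) < 1/v for θ > 0 and p(θ) > 1/v for θ < 0. -/

import Mathlib

open Real

/-- Bernoulli-type key inequality: `1 + v*(e^θ - 1) < e^{vθ}` for `θ ≠ 0`, `v > 1`. -/
lemma stmt15_key1 {v : ℝ} (hv : 1 < v) {θ : ℝ} (hθ : θ ≠ 0) :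
    1 + v * (exp θ - 1) < exp (v * θ) := by
  have hs : (-1 : ℝ) ≤ exp θ - 1 := by nlinarith [exp_pos θ]
  have hs' : exp θ - 1 ≠ 0 := by
    intro h
    apply hθ
    have : exp θ = exp 0 := by rw [Real.exp_zero]; linarith
    exact Real.exp_injective this
  have h := one_add_mul_self_lt_rpow_one_add hs hs' hv
  rw [show (1 : ℝ) + (exp θ - 1) = exp θ from by ring] at h
  rwa [Real.rpow_def_of_pos (exp_pos θ), Real.log_exp, mul_comm θ v] at h

/-- Key inequality for the derivative sign: `v e^{vθ} < e^θ + (v-1) e^{(v+1)θ}`. -/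
lemma stmt15_key2 {v : ℝ} (hv : 1 < v) {θ : ℝ} (hθ : θ ≠ 0) :
    v * exp (v * θ) < exp θ + (v - 1) * exp ((v + 1) * θ) := by
  have hxy : (1 - v) * θ ≠ θ := by
    intro h
    apply hθ
    have : (v : ℝ) * θ = 0 := by linarith [h]
    rcases mul_eq_zero.1 this with h' | h'
    · exact absurd h' (by linarith)
    · exact h'
  have ha : (0 : ℝ) < 1 / v := by positivity
  have hb : (0 : ℝ) < (v - 1) / v := by
    apply div_pos <;> linarith
  have hab : 1 / v + (v - 1) / v = 1 := by field_simp; ring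
  have h := strictConvexOn_exp.2 (Set.mem_univ ((1 - v) * θ)) (Set.mem_univ θ)
    hxy ha hb hab
  simp only [smul_eq_mul] at h
  rw [show 1 / v * ((1 - v) * θ) + (v - 1) / v * θ = 0 from by field_simp; ring,
    Real.exp_zero] at h
  -- h : 1 < 1/v * exp ((1-v)*θ) + (v-1)/v * exp θ
  have hv0 : (0 : ℝ) < v := by linarith
  have h2 : v < exp ((1 - v) * θ) + (v - 1) * exp θ := by
    have := mul_lt_mul_of_pos_left h hv0
    field_simp at this ⊢
    linarith
  have hmul := mul_lt_mul_of_pos_right h2 (exp_pos (v * θ))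
  have e1 : exp ((1 - v) * θ) * exp (v * θ) = exp θ := by
    rw [← Real.exp_add]; ring_nf
  have e2 : exp θ * exp (v * θ) = exp ((v + 1) * θ) := by
    rw [← Real.exp_add]; ring_nf
  nlinarith [hmul]

lemma stmt15_hasDeriv (v θ : ℝ) (hD : 1 - exp (v * θ) ≠ 0) :
    HasDerivAt (fun t => (1 - exp t) / (1 - exp (v * t)))
      (((-exp θ) * (1 - exp (v * θ)) - (1 - exp θ) * (-(exp (v * θ) * v))) /
        (1 - exp (v * θ)) ^ 2) θ := by
  have h1 : HasDerivAt (fun t : ℝ => 1 - exp t) (-exp θ) θ := by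
    simpa using (Real.hasDerivAt_exp θ).const_sub 1
  have h2 : HasDerivAt (fun t : ℝ => 1 - exp (v * t)) (-(exp (v * θ) * v)) θ := by
    have h3 : HasDerivAt (fun t : ℝ => exp (v * t)) (exp (v * θ) * v) θ := by
      simpa using ((hasDerivAt_id θ).const_mul v).exp
    simpa using h3.const_sub 1
  exact h1.div h2 hD

lemma stmt15_deriv_neg {v : ℝ} (hv : 1 < v) {θ : ℝ} (hθ : θ ≠ 0)
    (hD : 1 - exp (v * θ) ≠ 0) :
    ((-exp θ) * (1 - exp (v * θ)) - (1 - exp θ) * (-(exp (v * θ) * v))) /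
      (1 - exp (v * θ)) ^ 2 < 0 := by
  apply div_neg_of_neg_of_pos _ (pow_two_pos_of_ne_zero hD)
  have hk := stmt15_key2 hv hθ
  have e2 : exp θ * exp (v * θ) = exp ((v + 1) * θ) := by
    rw [← Real.exp_add]; ring_nf
  nlinarith [hk]

/-- The equilibrium non-participation probability
`p(θ) = (1-e^θ)/(1-e^{vθ})` (with `p(0) = 1/v`) is strictly decreasing in the
risk parameter `θ`; in particular `p(θ) < 1/v` for `θ > 0` and `p(θ) > 1/v`
for `θ < 0`. -/
theorem stmt15 (v : ℝ) (hv : 1 < v) (p : ℝ → ℝ)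
    (hp : ∀ θ : ℝ, p θ = if θ = 0 then 1 / v else (1 - exp θ) / (1 - exp (v * θ))) :
    StrictAnti p ∧
    (∀ θ : ℝ, 0 < θ → p θ < 1 / v) ∧
    (∀ θ : ℝ, θ < 0 → 1 / v < p θ) := by
  have hv0 : (0 : ℝ) < v := by linarith
  set f : ℝ → ℝ := fun t => (1 - exp t) / (1 - exp (v * t)) with hf
  have hp0 : p 0 = 1 / v := by rw [hp]; simp
  have hpne : ∀ θ : ℝ, θ ≠ 0 → p θ = f θ := by
    intro θ hθ; rw [hp]; simp [hθ, hf]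
  -- denominators
  have hDpos : ∀ θ : ℝ, 0 < θ → exp (v * θ) - 1 > 0 := by
    intro θ hθ
    have : (0 : ℝ) < v * θ := by positivity
    nlinarith [Real.exp_lt_exp.2 (show (0:ℝ) < v * θ from this), Real.exp_zero]
  have hDneg : ∀ θ : ℝ, θ < 0 → 1 - exp (v * θ) > 0 := by
    intro θ hθ
    have h1 : v * θ < 0 := mul_neg_of_pos_of_neg hv0 hθ
    nlinarith [Real.exp_lt_exp.2 h1, Real.exp_zero]
  -- bounds
  have hpos : ∀ θ : ℝ, 0 < θ → p θ < 1 / v := by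
    intro θ hθ
    rw [hpne θ (ne_of_gt hθ)]
    have hD := hDpos θ hθ
    have hkey := stmt15_key1 hv (ne_of_gt hθ)
    have : f θ = (exp θ - 1) / (exp (v * θ) - 1) := by
      simp only [hf]
      rw [show (1 - exp θ) = -(exp θ - 1) from by ring,
        show (1 - exp (v * θ)) = -(exp (v * θ) - 1) from by ring, neg_div_neg_eq]
    rw [this, div_lt_div_iff₀ hD hv0]
    linarith
  have hneg : ∀ θ : ℝ, θ < 0 → 1 / v < p θ := by
    intro θ hθ
    rw [hpne θ (ne_of_lt hθ)]
    have hD := hDneg θ hθ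
    have hkey := stmt15_key1 hv (ne_of_lt hθ)
    simp only [hf]
    rw [div_lt_div_iff₀ hv0 hD]
    linarith
  -- strict antitonicity on each open half line
  have hmain : ∀ s : Set ℝ, Convex ℝ s → IsOpen s → (∀ x ∈ s, x ≠ 0) →
      (∀ x ∈ s, 1 - exp (v * x) ≠ 0) → StrictAntiOn p s := by
    intro s hconv hopen hne hD
    apply strictAntiOn_of_deriv_neg hconv
    · apply ContinuousOn.congr (f := f)
      · exact (continuous_const.sub Real.continuous_exp).continuousOn.div
          ((continuous_const.sub (Real.continuous_exp.comp
            (continuous_const.mul continuous_id))).continuousOn)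
          (fun x hx => hD x hx)
      · intro x hx; exact hpne x (hne x hx)
    · intro x hx
      rw [hopen.interior_eq] at hx
      have hev : p =ᶠ[nhds x] f := by
        filter_upwards [hopen.mem_nhds hx] with y hy
        exact hpne y (hne y hy)
      have hder : HasDerivAt p
          (((-exp x) * (1 - exp (v * x)) - (1 - exp x) * (-(exp (v * x) * v))) /
            (1 - exp (v * x)) ^ 2) x :=
        (stmt15_hasDeriv v x (hD x hx)).congr_of_eventuallyEq hev
      rw [hder.deriv]
      exact stmt15_deriv_neg hv (hne x hx) (hD x hx)
  have hIoi : StrictAntiOn p (Set.Ioi 0) := by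
    apply hmain _ (convex_Ioi 0) isOpen_Ioi
    · intro x hx; exact ne_of_gt hx
    · intro x hx; have := hDpos x hx; intro h; linarith [h]
  have hIio : StrictAntiOn p (Set.Iio 0) := by
    apply hmain _ (convex_Iio 0) isOpen_Iio
    · intro x hx; exact ne_of_lt hx
    · intro x hx; have := hDneg x hx; intro h; linarith [h]
  refine ⟨?_, hpos, hneg⟩
  intro a b hab
  rcases lt_trichotomy a 0 with ha | ha | ha
  · rcases lt_trichotomy b 0 with hb | hb | hb
    · exact hIio ha hb hab
    · rw [hb, hp0]; exact hneg a ha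
    · calc p b < 1 / v := hpos b hb
        _ < p a := hneg a ha
  · rw [ha, hp0]; exact hpos b (ha ▸ hab)
  · exact hIoi ha (lt_trans ha hab) hab
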